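/- Let X_n be the n×n matrix of the second-order finite difference discretization of u'' + u with Dirichlet–Neumann boundary conditions, i.e. h²X_n is tridiagonal with diagonal entries 2 + h² except the (n,n) entry 1 + h², and off-diagonal entries −1, where h = 1/(n+1). Then the eigenvalues of h²X_n are exactly 2 + h² − 2cos(θ_{j,n}^{(0,1)}) with θ_{j,n}^{(0,1)} = (j − 1/2)π/(n + 1/2), j = 1, …, n. -/

import Mathlib

open Matrix Real

/-- `h²Xₙ` for the second-order finite difference discretization of `u'' + u`
with Dirichlet–Neumann boundary conditions, `h = 1/(n+1)`: tridiagonal with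
diagonal `2 + h²` except the `(n,n)` entry `1 + h²`, off-diagonals `-1`. -/
noncomputable def fdMat (n : ℕ) : Matrix (Fin n) (Fin n) ℝ :=
  Matrix.of fun i j =>
    if i = j then
      (if (i : ℕ) = n - 1 then 1 + (1 / ((n : ℝ) + 1)) ^ 2
       else 2 + (1 / ((n : ℝ) + 1)) ^ 2)
    else if (i : ℕ) + 1 = (j : ℕ) ∨ (j : ℕ) + 1 = (i : ℕ) then -1 else 0

noncomputable def thF (n : ℕ) (j : Fin n) : ℝ := (((j:ℕ):ℝ) + 1/2) * π / ((n:ℝ) + 1/2)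

noncomputable def muF (n : ℕ) (j : Fin n) : ℝ :=
  2 + (1/((n:ℝ)+1))^2 - 2 * Real.cos (thF n j)

lemma trig1 (θ : ℝ) (k : ℕ) :
    Real.sin ((k:ℝ)*θ) + Real.sin (((k:ℝ)+2)*θ) = 2 * Real.cos θ * Real.sin (((k:ℝ)+1)*θ) := by
  have h1 := Real.sin_add (((k:ℝ)+1)*θ) θ
  have h2 := Real.sin_sub (((k:ℝ)+1)*θ) θ
  have e1 : (k:ℝ)*θ = ((k:ℝ)+1)*θ - θ := by ring
  have e2 : ((k:ℝ)+2)*θ = ((k:ℝ)+1)*θ + θ := by ring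
  rw [e1, e2, h1, h2]; ring

lemma trig2 (n : ℕ) (j : Fin n) :
    Real.sin (((n:ℝ)+1) * thF n j) = Real.sin ((n:ℝ) * thF n j) := by
  have hpos : ((n:ℝ) + 1/2) ≠ 0 := by positivity
  have key : (((n:ℝ)+1)*thF n j - (n:ℝ)*thF n j)/2 * ((((n:ℝ)+1)*thF n j + (n:ℝ)*thF n j)/2 - (((n:ℝ)+1)*thF n j + (n:ℝ)*thF n j)/2) = 0 := by ring
  have hmid : (((n:ℝ)+1)*thF n j + (n:ℝ)*thF n j)/2 = ((j:ℕ):ℝ)*π + π/2 := by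
    unfold thF; field_simp; ring
  have : Real.sin (((n:ℝ)+1)*thF n j) - Real.sin ((n:ℝ)*thF n j) = 0 := by
    rw [Real.sin_sub_sin, hmid, Real.cos_add_pi_div_two, Real.sin_nat_mul_pi]
    ring
  linarith

lemma eigen (n : ℕ) (j : Fin n) :
    ∃ v : Fin n → ℝ, v ≠ 0 ∧ (fdMat n).mulVec v = (muF n j) • v := by
  have hn : 0 < n := j.pos
  set θ := thF n j with hθdef
  set V : ℕ → ℝ := fun k => Real.sin ((k:ℝ)*θ) with hVdef
  have hrec : ∀ k : ℕ, V k + V (k+2) = 2*Real.cos θ * V (k+1) := by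
    intro k; simp only [hVdef]; push_cast; exact trig1 θ k
  have hVn : V (n+1) = V n := by simp only [hVdef]; push_cast; exact trig2 n j
  have hθpos : 0 < θ := by rw [hθdef]; unfold thF; positivity
  have hθlt : θ < π := by
    have hjn : ((j:ℕ):ℝ) < (n:ℝ) := by exact_mod_cast j.isLt
    rw [hθdef]; unfold thF; rw [div_lt_iff₀ (by positivity)]
    nlinarith [Real.pi_pos]
  refine ⟨fun i => V ((i:ℕ)+1), ?_, ?_⟩
  · intro hzero
    have h0 : V 1 = 0 := by
      have := congrFun hzero ⟨0, hn⟩; simpa using this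
    rw [hVdef] at h0
    simp only [Nat.cast_one, one_mul] at h0
    exact absurd h0 (Real.sin_pos_of_pos_of_lt_pi hθpos hθlt).ne'
  · funext i
    show ∑ k : Fin n, fdMat n i k * V ((k:ℕ)+1) = _
    have hsplit : ∀ k : Fin n, fdMat n i k * V ((k:ℕ)+1) =
        (if k = i then
          (if (i:ℕ) = n - 1 then 1 + (1/((n:ℝ)+1))^2 else 2 + (1/((n:ℝ)+1))^2) * V ((i:ℕ)+1)
         else 0)
        + (if (i:ℕ)+1 = (k:ℕ) then -V ((k:ℕ)+1) else 0)
        + (if (k:ℕ)+1 = (i:ℕ) then -V ((k:ℕ)+1) else 0) := by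
      intro k
      simp only [fdMat, Matrix.of_apply]
      rcases eq_or_ne k i with rfl | hne
      · have h1 : ¬((k:ℕ)+1 = (k:ℕ)) := by omega
        simp [h1]
      · have h1 : ¬(i = k) := fun h => hne h.symm
        rw [if_neg h1, if_neg hne]
        by_cases h2 : (i:ℕ)+1 = (k:ℕ)
        · have h3 : ¬((k:ℕ)+1 = (i:ℕ)) := by omega
          simp [h2, h3]
        · by_cases h3 : (k:ℕ)+1 = (i:ℕ)
          · simp [h2, h3]
          · simp [h2, h3]
    rw [Finset.sum_congr rfl fun k _ => hsplit k]
    rw [Finset.sum_add_distrib, Finset.sum_add_distrib]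
    have e1 : ∑ k : Fin n, (if k = i then
        (if (i:ℕ) = n - 1 then 1 + (1/((n:ℝ)+1))^2 else 2 + (1/((n:ℝ)+1))^2) * V ((i:ℕ)+1)
        else 0) =
        (if (i:ℕ) = n - 1 then 1 + (1/((n:ℝ)+1))^2 else 2 + (1/((n:ℝ)+1))^2) * V ((i:ℕ)+1) := by
      rw [Finset.sum_ite_eq' Finset.univ i]; simp
    have e2 : ∑ k : Fin n, (if (i:ℕ)+1 = (k:ℕ) then -V ((k:ℕ)+1) else 0)
        = (if h : (i:ℕ)+1 < n then -V ((i:ℕ)+2) else 0) := by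
      by_cases h : (i:ℕ)+1 < n
      · rw [dif_pos h, Finset.sum_eq_single (⟨(i:ℕ)+1, h⟩ : Fin n)]
        · simp
        · intro b _ hb; exact if_neg fun hc => hb (Fin.ext hc.symm)
        · intro h'; exact absurd (Finset.mem_univ _) h'
      · rw [dif_neg h]
        exact Finset.sum_eq_zero fun k _ => if_neg (by have := k.isLt; omega)
    have e3 : ∑ k : Fin n, (if (k:ℕ)+1 = (i:ℕ) then -V ((k:ℕ)+1) else 0) = -V (i:ℕ) := by
      by_cases h : 0 < (i:ℕ)
      · have hlt : (i:ℕ)-1 < n := by have := i.isLt; omega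
        rw [Finset.sum_eq_single (⟨(i:ℕ)-1, hlt⟩ : Fin n)]
        · rw [if_pos (by simp; omega)]
          congr 2
          simp; omega
        · intro b _ hb; refine if_neg fun hc => hb (Fin.ext ?_); simp; omega
        · intro h'; exact absurd (Finset.mem_univ _) h'
      · have hi0 : (i:ℕ) = 0 := by omega
        rw [hi0]
        have hv0 : V 0 = 0 := by simp [hVdef]
        rw [hv0, neg_zero]
        exact Finset.sum_eq_zero fun k _ => if_neg (by omega)
    rw [e1, e2, e3]
    show _ = muF n j * V ((i:ℕ)+1)
    have hmu : muF n j = 2 + (1/((n:ℝ)+1))^2 - 2*Real.cos θ := rfl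
    rw [hmu]
    by_cases hc : (i:ℕ) = n - 1
    · have h2 : ¬((i:ℕ)+1 < n) := by omega
      rw [if_pos hc, dif_neg h2]
      have hVc2 : V ((i:ℕ)+2) = V ((i:ℕ)+1) := by
        have ha : (i:ℕ)+2 = n+1 := by omega
        have hb : (i:ℕ)+1 = n := by omega
        rw [ha, hb, hVn]
      have hr := hrec (i:ℕ)
      linear_combination hVc2 - hr
    · have h2 : (i:ℕ)+1 < n := by have := i.isLt; omega
      rw [if_neg hc, dif_pos h2]
      have hr := hrec (i:ℕ)
      linear_combination -hr

lemma th_mem (n : ℕ) (j : Fin n) : thF n j ∈ Set.Icc 0 π := by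
  have hjn : ((j:ℕ):ℝ) < (n:ℝ) := by exact_mod_cast j.isLt
  constructor
  · unfold thF; positivity
  · unfold thF
    rw [div_le_iff₀ (by positivity)]
    nlinarith [Real.pi_pos]

lemma mu_inj (n : ℕ) : Function.Injective (muF n) := by
  intro a b hab
  have hcos : Real.cos (thF n a) = Real.cos (thF n b) := by
    unfold muF at hab; linarith
  have hth := Real.injOn_cos (th_mem n a) (th_mem n b) hcos
  unfold thF at hth
  have hne : ((n:ℝ) + 1/2) ≠ 0 := by positivity
  have : ((a:ℕ):ℝ) = ((b:ℕ):ℝ) := by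
    field_simp at hth
    linarith
  exact Fin.ext (by exact_mod_cast this)

lemma mu_mem (n : ℕ) (j : Fin n) : muF n j ∈ spectrum ℝ (fdMat n) := by
  obtain ⟨v, hv, hmul⟩ := eigen n j
  rw [spectrum.mem_iff]
  intro hunit
  rw [Matrix.isUnit_iff_isUnit_det, isUnit_iff_ne_zero] at hunit
  apply hunit
  rw [← Matrix.exists_mulVec_eq_zero_iff]
  refine ⟨v, hv, ?_⟩
  rw [Matrix.sub_mulVec, hmul]
  have : (algebraMap ℝ (Matrix (Fin n) (Fin n) ℝ) (muF n j)).mulVec v = muF n j • v := by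
    funext i
    simp [Matrix.algebraMap_eq_diagonal, Matrix.mulVec_diagonal]
  rw [this, sub_self]

/-- The eigenvalues of `h²Xₙ` are exactly `2 + h² - 2cos((j - 1/2)π/(n + 1/2))`,
`j = 1, …, n`, with `h = 1/(n+1)`. -/
theorem stmt_4 (n : ℕ) (hA : (fdMat n).IsHermitian) :
    ∃ e : Equiv.Perm (Fin n), ∀ j : Fin n,
      hA.eigenvalues j =
        2 + (1 / ((n : ℝ) + 1)) ^ 2 -
          2 * Real.cos ((((e j : ℕ) : ℝ) + 1 - 1/2) * π / ((n : ℝ) + 1/2)) := by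
  classical
  have hmem : ∀ k : Fin n, muF n k ∈ Set.range hA.eigenvalues := by
    intro k
    rw [← Matrix.IsHermitian.spectrum_real_eq_range_eigenvalues hA]
    exact mu_mem n k
  have hsub : Finset.image (muF n) Finset.univ ⊆ Finset.image hA.eigenvalues Finset.univ := by
    intro x hx
    simp only [Finset.mem_image, Finset.mem_univ, true_and] at hx ⊢
    obtain ⟨k, rfl⟩ := hx
    obtain ⟨i, hi⟩ := hmem k
    exact ⟨i, hi⟩
  have hcard1 : (Finset.image (muF n) Finset.univ).card = n := by
    rw [Finset.card_image_of_injective _ (mu_inj n), Finset.card_univ, Fintype.card_fin]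
  have heq : Finset.image hA.eigenvalues Finset.univ = Finset.image (muF n) Finset.univ := by
    refine (Finset.eq_of_subset_of_card_le hsub ?_).symm
    rw [hcard1]
    exact le_trans Finset.card_image_le (by simp)
  have hEinj : Set.InjOn hA.eigenvalues (Finset.univ : Finset (Fin n)) := by
    rw [← Finset.card_image_iff, heq, hcard1, Finset.card_univ, Fintype.card_fin]
  have hEj : ∀ jj : Fin n, ∃ k, muF n k = hA.eigenvalues jj := by
    intro jj
    have : hA.eigenvalues jj ∈ Finset.image (muF n) Finset.univ := by
      rw [← heq]; exact Finset.mem_image_of_mem _ (Finset.mem_univ jj)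
    simpa only [Finset.mem_image, Finset.mem_univ, true_and] using this
  choose g hg using hEj
  have hginj : Function.Injective g := by
    intro a b hab
    apply hEinj (Finset.mem_univ a) (Finset.mem_univ b)
    rw [← hg a, ← hg b, hab]
  refine ⟨Equiv.ofBijective g (Finite.injective_iff_bijective.mp hginj), fun jj => ?_⟩
  rw [← hg jj]
  simp only [Equiv.ofBijective_apply]
  unfold muF thF
  have harg : (((g jj : ℕ):ℝ) + 1/2) * π / ((n:ℝ) + 1/2)
      = (((g jj : ℕ):ℝ) + 1 - 1/2) * π / ((n:ℝ) + 1/2) := by ring_nf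
  rw [harg]
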